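/- For every m ≥ 1, 2·( ((A^(m−1)).mulVec ![0,0,1]) 1 + ((A^(m−1)).mulVec ![0,0,1]) 2 ) + ((B^(m−1)).mulVec ![0,0,0,1]) 3 = 2^m + ε(m), where ε(m) = −1 if m ≡ 0 (mod 3) and ε(m) = 1 otherwise. -/

import Mathlib

def A : Matrix (Fin 3) (Fin 3) ℤ := !![0, 1, 0; 0, 0, 1; 2, 1, 1]

def B : Matrix (Fin 4) (Fin 4) ℤ :=
  !![0, 0, 0, 1; 0, 1, 1, 0; 2, 1, 0, 0; 0, 0, 1, 1]

lemma stepA (w : Fin 3 → ℤ) (i : Fin 3) :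
    (A ^ 4).mulVec w i = 2 * (A ^ 3).mulVec w i + A.mulVec w i - 2 * w i := by
  fin_cases i <;>
    simp [A, pow_succ, Matrix.mulVec, dotProduct, Matrix.mul_apply,
      Fin.sum_univ_three, Fin.sum_univ_four] <;> ring

lemma stepB (w : Fin 4 → ℤ) (i : Fin 4) :
    (B ^ 4).mulVec w i = 2 * (B ^ 3).mulVec w i + B.mulVec w i - 2 * w i := by
  fin_cases i <;>
    simp [B, pow_succ, Matrix.mulVec, dotProduct, Matrix.mul_apply,
      Fin.sum_univ_three, Fin.sum_univ_four] <;> ring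

lemma keyA (n : ℕ) (i : Fin 3) :
    (A ^ (n + 4)).mulVec ![0,0,1] i
      = 2 * (A ^ (n + 3)).mulVec ![0,0,1] i + (A ^ (n + 1)).mulVec ![0,0,1] i
        - 2 * (A ^ n).mulVec ![0,0,1] i := by
  have h : ∀ k : ℕ, (A ^ (n + k)).mulVec ![0,0,1] = (A ^ k).mulVec ((A ^ n).mulVec ![0,0,1]) := by
    intro k
    rw [Matrix.mulVec_mulVec, ← pow_add, Nat.add_comm]
  rw [h 4, h 3, h 1, pow_one]
  exact stepA _ i

lemma keyB (n : ℕ) (i : Fin 4) :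
    (B ^ (n + 4)).mulVec ![0,0,0,1] i
      = 2 * (B ^ (n + 3)).mulVec ![0,0,0,1] i + (B ^ (n + 1)).mulVec ![0,0,0,1] i
        - 2 * (B ^ n).mulVec ![0,0,0,1] i := by
  have h : ∀ k : ℕ, (B ^ (n + k)).mulVec ![0,0,0,1] = (B ^ k).mulVec ((B ^ n).mulVec ![0,0,0,1]) := by
    intro k
    rw [Matrix.mulVec_mulVec, ← pow_add, Nat.add_comm]
  rw [h 4, h 3, h 1, pow_one]
  exact stepB _ i

lemma key (n : ℕ) :
    2 * (((A ^ n).mulVec ![0, 0, 1]) 1 + ((A ^ n).mulVec ![0, 0, 1]) 2) +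
        ((B ^ n).mulVec ![0, 0, 0, 1]) 3 =
      2 ^ (n + 1) + (if (n + 1) % 3 = 0 then -1 else 1) := by
  induction n using Nat.strong_induction_on with
  | _ n ih =>
    match n with
    | 0 => norm_num [Matrix.one_mulVec, Matrix.one_apply, Matrix.mulVec, dotProduct, Fin.sum_univ_three, Fin.sum_univ_four] <;> rfl
    | 1 => norm_num [A, B, Matrix.mulVec, dotProduct, Fin.sum_univ_three, Fin.sum_univ_four, pow_one] <;> rfl
    | 2 => norm_num [A, B, pow_succ, Matrix.mulVec, dotProduct, Matrix.mul_apply, Fin.sum_univ_three, Fin.sum_univ_four] <;> rfl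
    | 3 => norm_num [A, B, pow_succ, Matrix.mulVec, dotProduct, Matrix.mul_apply, Fin.sum_univ_three, Fin.sum_univ_four] <;> rfl
    | (k + 4) =>
      have h0 := ih k (by omega)
      have h1 := ih (k + 1) (by omega)
      have h3 := ih (k + 3) (by omega)
      rw [keyA k 1, keyA k 2, keyB k 3]
      have e4 : (k + 4 + 1) % 3 = (k + 1 + 1) % 3 := by omega
      have e3 : (k + 3 + 1) % 3 = (k + 1) % 3 := by omega
      have p4 : (2:ℤ) ^ (k + 4 + 1) = 2 * 2 ^ (k + 3 + 1) + 2 ^ (k + 1 + 1) - 2 * 2 ^ (k + 1) := by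
        ring
      rw [e4, p4]
      split_ifs at h0 h1 h3 ⊢ <;> omega

theorem total_count_sv1_easy (m : ℕ) (hm : 1 ≤ m) :
    2 * (((A ^ (m - 1)).mulVec ![0, 0, 1]) 1 + ((A ^ (m - 1)).mulVec ![0, 0, 1]) 2) +
        ((B ^ (m - 1)).mulVec ![0, 0, 0, 1]) 3 =
      2 ^ m + (if m % 3 = 0 then -1 else 1) := by
  obtain ⟨n, rfl⟩ : ∃ n, m = n + 1 := ⟨m - 1, by omega⟩
  simpa using key n
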